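/- arXiv:1809.02750 — 4 statements merged into one kernel-verified Lean document; each statement's English description precedes it below -/
import Mathlib

section
/- Practically stable initial set for switched discrete systems (Corollary 2): Set λ := max_{p∈P} λ_p ∈ (0,1) and α̂(s) := max_{p∈P} α_p(s), and fix δ ∈ (λ, 1). Then the set S := ⋂_{p∈P} { x ∈ ℝ^n : V_p(x) ≤ ω } is nonempty and compact, and for every switching signal σ with average dwell time N_a ≥ ln(μ)/ln(δ/λ) and chatter bound N_0 ≥ 1, every bounded discrete disturbance d, and every initial state x_0 ∈ S, the solution (x_k) of x_{k+1} = f_{σ(k)}(x_k, d_k) satisfies: for every k ≥ 0 there exists p ∈ P with V_p(x_k) ≤ μ^{N_0}·ω + (μ^{N_0}/(1−δ))·α̂(‖d‖∞). -/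
/-- A class `K∞` function: continuous, strictly increasing on `[0,∞)`, vanishing at `0`,
and tending to `∞`. -/
def IsClassKInf (a : ℝ → ℝ) : Prop :=
  ContinuousOn a (Set.Ici 0) ∧ StrictMonoOn a (Set.Ici 0) ∧ a 0 = 0 ∧
    Filter.Tendsto a Filter.atTop Filter.atTop

/-- A class `KL` function. -/
def IsClassKL (b : ℝ → ℝ → ℝ) : Prop :=
  (∀ t, 0 ≤ t → IsClassKInf fun s => b s t) ∧
  (∀ s, 0 ≤ s → StrictAntiOn (b s) (Set.Ici 0)) ∧
  (∀ s, 0 ≤ s → Filter.Tendsto (b s) Filter.atTop (nhds 0))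

/-- Number of switches of the switching signal `sg` on the discrete interval `[kl, k)`. -/
noncomputable def switchCountD {P : Type} (sg : ℕ → P) (kl k : ℕ) : ℕ :=
  {j : ℕ | kl ≤ j ∧ j < k ∧ sg j ≠ sg (j + 1)}.ncard

/-- `sg` has average dwell time `Na` with chatter bound `N0`. -/
def HasADTD {P : Type} (sg : ℕ → P) (N0 Na : ℝ) : Prop :=
  ∀ kl k : ℕ, kl ≤ k → (switchCountD sg kl k : ℝ) ≤ N0 + ((k : ℝ) - (kl : ℝ)) / Na

lemma scd_self {P : Type} (sg : ℕ → P) (k : ℕ) : switchCountD sg k k = 0 := by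
  have h : {j : ℕ | k ≤ j ∧ j < k ∧ sg j ≠ sg (j + 1)} = ∅ := by
    ext j
    simp only [Set.mem_setOf_eq, Set.mem_empty_iff_false, iff_false]
    rintro ⟨h1, h2, -⟩; omega
  rw [switchCountD, h, Set.ncard_empty]

open Classical in
lemma scd_succ {P : Type} (sg : ℕ → P) {kl k : ℕ} (h : kl ≤ k) :
    switchCountD sg kl (k + 1)
      = switchCountD sg kl k + (if sg k = sg (k + 1) then 0 else 1) := by
  have hfin : {j : ℕ | kl ≤ j ∧ j < k ∧ sg j ≠ sg (j + 1)}.Finite :=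
    (Set.finite_Iio k).subset fun j hj => hj.2.1
  by_cases hsw : sg k = sg (k + 1)
  · have he : {j : ℕ | kl ≤ j ∧ j < k + 1 ∧ sg j ≠ sg (j + 1)}
        = {j : ℕ | kl ≤ j ∧ j < k ∧ sg j ≠ sg (j + 1)} := by
      ext j
      simp only [Set.mem_setOf_eq]
      constructor
      · rintro ⟨h1, h2, h3⟩
        refine ⟨h1, ?_, h3⟩
        rcases Nat.lt_succ_iff_lt_or_eq.mp h2 with h' | rfl
        · exact h'
        · exact absurd hsw h3
      · rintro ⟨h1, h2, h3⟩
        exact ⟨h1, Nat.lt_succ_of_lt h2, h3⟩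
    rw [switchCountD, he, switchCountD, if_pos hsw, Nat.add_zero]
  · have he : {j : ℕ | kl ≤ j ∧ j < k + 1 ∧ sg j ≠ sg (j + 1)}
        = insert k {j : ℕ | kl ≤ j ∧ j < k ∧ sg j ≠ sg (j + 1)} := by
      ext j
      simp only [Set.mem_setOf_eq, Set.mem_insert_iff]
      constructor
      · rintro ⟨h1, h2, h3⟩
        rcases Nat.lt_succ_iff_lt_or_eq.mp h2 with h' | rfl
        · exact Or.inr ⟨h1, h', h3⟩
        · exact Or.inl rfl
      · intro hj
        rcases hj with hjk | ⟨h1, h2, h3⟩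
        · subst hjk
          exact ⟨h, Nat.lt_succ_self _, hsw⟩
        · exact ⟨h1, Nat.lt_succ_of_lt h2, h3⟩
    rw [switchCountD, he,
      Set.ncard_insert_of_notMem (fun hc => absurd hc.2.1 (lt_irrefl k)) hfin,
      switchCountD, if_neg hsw]

lemma geom_sum_le_div {δ : ℝ} (h0 : 0 < δ) (h1 : δ < 1) (N : ℕ) :
    ∑ i ∈ Finset.range N, δ ^ i ≤ 1 / (1 - δ) := by
  rw [geom_sum_eq (ne_of_lt h1),
    show δ ^ N - 1 = -(1 - δ ^ N) by ring, show δ - 1 = -(1 - δ) by ring, neg_div_neg_eq]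
  rw [div_le_div_iff₀ (by linarith) (by linarith)]
  nlinarith [pow_nonneg h0.le N]

/-- Corollary 2: practically stable initial set for switched discrete systems. -/
theorem practically_stable_initial_set_discrete
    (n m : ℕ) (P : Type) [Fintype P] [Nonempty P]
    (f : P → EuclideanSpace ℝ (Fin n) → EuclideanSpace ℝ (Fin m) → EuclideanSpace ℝ (Fin n))
    (hf : ∀ p, Continuous fun xu : EuclideanSpace ℝ (Fin n) × EuclideanSpace ℝ (Fin m) =>
      f p xu.1 xu.2)
    (xstar : P → EuclideanSpace ℝ (Fin n))
    (hfix : ∀ p, f p (xstar p) 0 = xstar p)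
    (V : P → EuclideanSpace ℝ (Fin n) → ℝ)
    (hVcont : ∀ p, Continuous (V p))
    (hVnonneg : ∀ p x, 0 ≤ V p x)
    (alow aup ain : P → ℝ → ℝ)
    (halow : ∀ p, IsClassKInf (alow p)) (haup : ∀ p, IsClassKInf (aup p))
    (hain : ∀ p, IsClassKInf (ain p))
    (lam : P → ℝ) (hlam : ∀ p, 0 < lam p ∧ lam p < 1)
    (hsandwich : ∀ p x, alow p ‖x - xstar p‖ ≤ V p x ∧ V p x ≤ aup p ‖x - xstar p‖)
    (hdecr : ∀ p x u, V p (f p x u) ≤ lam p * V p x + ain p ‖u‖)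
    (κ : ℝ) (hκ : 0 < κ)
    (μ : ℝ) (hμ : 1 ≤ μ)
    (hμb : ∀ (p q : P) (x : EuclideanSpace ℝ (Fin n)), κ ≤ V p x → V q x ≤ μ * V p x)
    (ω : ℝ) (hω : 0 < ω)
    (hωb : ∀ (p : P) (x : EuclideanSpace ℝ (Fin n)), (∃ q : P, V q x ≤ κ) → V p x ≤ ω)
    (δ : ℝ) (hδ1 : Finset.univ.sup' Finset.univ_nonempty lam < δ) (hδ2 : δ < 1) :
    (⋂ p : P, {x : EuclideanSpace ℝ (Fin n) | V p x ≤ ω}).Nonempty ∧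
    IsCompact (⋂ p : P, {x : EuclideanSpace ℝ (Fin n) | V p x ≤ ω}) ∧
    ∀ (sg : ℕ → P) (N0 Na : ℝ), 1 ≤ N0 → 0 < Na →
      Real.log μ / Real.log (δ / Finset.univ.sup' Finset.univ_nonempty lam) ≤ Na →
      HasADTD sg N0 Na →
      ∀ d : ℕ → EuclideanSpace ℝ (Fin m), BddAbove (Set.range fun k => ‖d k‖) →
        ∀ x : ℕ → EuclideanSpace ℝ (Fin n), (∀ k, x (k + 1) = f (sg k) (x k) (d k)) →
          x 0 ∈ ⋂ p : P, {y : EuclideanSpace ℝ (Fin n) | V p y ≤ ω} →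
          ∀ k : ℕ, ∃ p : P,
            V p (x k) ≤ μ ^ N0 * ω +
              μ ^ N0 / (1 - δ) *
                (Finset.univ.sup' Finset.univ_nonempty fun q => ain q (⨆ j, ‖d j‖)) := by
  classical
  obtain ⟨p₀⟩ := ‹Nonempty P›
  set lamS := Finset.univ.sup' Finset.univ_nonempty lam with hlamS_def
  have hlam_le : ∀ p, lam p ≤ lamS := fun p => Finset.le_sup' lam (Finset.mem_univ p)
  have hlamS_pos : 0 < lamS := lt_of_lt_of_le (hlam p₀).1 (hlam_le p₀)
  have hlamS_lt1 : lamS < 1 := lt_trans hδ1 hδ2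
  have hδ0 : 0 < δ := lt_trans hlamS_pos hδ1
  have hωnn : 0 ≤ ω := hω.le
  have hμ0 : (0:ℝ) < μ := lt_of_lt_of_le one_pos hμ
  refine ⟨?_, ?_, ?_⟩
  · -- Nonempty
    refine ⟨xstar p₀, Set.mem_iInter.mpr fun p => ?_⟩
    have h0 : V p₀ (xstar p₀) ≤ 0 := by
      have h := (hsandwich p₀ (xstar p₀)).2
      rwa [sub_self, norm_zero, (haup p₀).2.2.1] at h
    exact hωb p (xstar p₀) ⟨p₀, le_trans h0 hκ.le⟩
  · -- Compact
    have hclosed : IsClosed (⋂ p : P, {x : EuclideanSpace ℝ (Fin n) | V p x ≤ ω}) :=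
      isClosed_iInter fun p => isClosed_le (hVcont p) continuous_const
    obtain ⟨R, hR⟩ := Filter.eventually_atTop.mp ((halow p₀).2.2.2.eventually_gt_atTop ω)
    have hsub : (⋂ p : P, {x : EuclideanSpace ℝ (Fin n) | V p x ≤ ω})
        ⊆ Metric.closedBall (xstar p₀) R := by
      intro y hy
      have hy0 : V p₀ y ≤ ω := Set.mem_iInter.mp hy p₀
      rw [Metric.mem_closedBall, dist_eq_norm]
      by_contra hcon
      push_neg at hcon
      have h1 := hR ‖y - xstar p₀‖ hcon.le
      have h2 := (hsandwich p₀ y).1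
      linarith
    exact Metric.isCompact_of_isClosed_isBounded hclosed
      (Metric.isBounded_closedBall.subset hsub)
  · -- Main estimate
    intro sg N0 Na hN0 hNa hNaB hADT d hd x hx hx0
    set D := ⨆ j, ‖d j‖ with hD_def
    set A := Finset.univ.sup' Finset.univ_nonempty (fun q => ain q D) with hA_def
    have hdD : ∀ j, ‖d j‖ ≤ D := fun j => le_ciSup hd j
    have hD0 : 0 ≤ D := le_trans (norm_nonneg _) (hdD 0)
    have hainD : ∀ q, ain q D ≤ A := fun q =>
      Finset.le_sup' (fun q => ain q D) (Finset.mem_univ q)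
    have hA0 : 0 ≤ A := by
      have h1 : ain p₀ 0 ≤ ain p₀ D :=
        (hain p₀).2.1.monotoneOn (Set.mem_Ici.mpr le_rfl) (Set.mem_Ici.mpr hD0) hD0
      have h2 := (hain p₀).2.2.1
      linarith [hainD p₀]
    have hμN0pos : (0:ℝ) < μ ^ N0 := Real.rpow_pos_of_pos hμ0 N0
    have hμN0one : (1:ℝ) ≤ μ ^ N0 := by
      calc (1:ℝ) = μ ^ (0:ℝ) := (Real.rpow_zero μ).symm
        _ ≤ μ ^ N0 := Real.rpow_le_rpow_of_exponent_le hμ (by linarith)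
    -- one-step estimate
    have hstep : ∀ k, V (sg k) (x (k + 1)) ≤ lamS * V (sg k) (x k) + A := by
      intro k
      rw [hx k]
      have h1 := hdecr (sg k) (x k) (d k)
      have h2 : ain (sg k) ‖d k‖ ≤ A := by
        have := (hain (sg k)).2.1.monotoneOn (Set.mem_Ici.mpr (norm_nonneg _))
          (Set.mem_Ici.mpr hD0) (hdD k)
        linarith [hainD (sg k)]
      have h3 : lam (sg k) * V (sg k) (x k) ≤ lamS * V (sg k) (x k) :=
        mul_le_mul_of_nonneg_right (hlam_le _) (hVnonneg _ _)
      linarith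
    -- μ^(1/Na) * lamS ≤ δ
    have hratio : μ ^ (1 / Na : ℝ) * lamS ≤ δ := by
      rcases eq_or_lt_of_le hμ with heq | hgt
      · rw [← heq, Real.one_rpow, one_mul]; exact hδ1.le
      · have hdl : 1 < δ / lamS := (one_lt_div hlamS_pos).mpr hδ1
        have hlog : 0 < Real.log (δ / lamS) := Real.log_pos hdl
        have h1 : Real.log μ ≤ Na * Real.log (δ / lamS) := by
          rw [div_le_iff₀ hlog] at hNaB
          linarith
        have h3 : μ ^ (1 / Na : ℝ) ≤ δ / lamS := by
          rw [Real.rpow_def_of_pos hμ0]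
          calc Real.exp (Real.log μ * (1 / Na)) ≤ Real.exp (Real.log (δ / lamS)) := by
                apply Real.exp_le_exp.mpr
                rw [mul_one_div, div_le_iff₀ hNa]
                linarith [mul_comm Na (Real.log (δ / lamS))]
            _ = δ / lamS := Real.exp_log (by positivity)
        calc μ ^ (1 / Na : ℝ) * lamS ≤ δ / lamS * lamS :=
              mul_le_mul_of_nonneg_right h3 hlamS_pos.le
          _ = δ := div_mul_cancel₀ δ (ne_of_gt hlamS_pos)
    -- key ADT estimate
    have hkey : ∀ s t : ℕ, s ≤ t →
        (μ : ℝ) ^ (switchCountD sg s t) * lamS ^ (t - s) ≤ μ ^ N0 * δ ^ (t - s) := by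
      intro s t hst
      have hadt := hADT s t hst
      have hcast : ((t : ℝ) - (s : ℝ)) = ((t - s : ℕ) : ℝ) := by
        rw [Nat.cast_sub hst]
      calc (μ : ℝ) ^ (switchCountD sg s t) * lamS ^ (t - s)
          = μ ^ ((switchCountD sg s t : ℕ) : ℝ) * lamS ^ (t - s) := by
            rw [Real.rpow_natCast]
        _ ≤ μ ^ (N0 + ((t - s : ℕ) : ℝ) * (1 / Na)) * lamS ^ (t - s) := by
            apply mul_le_mul_of_nonneg_right _ (pow_nonneg hlamS_pos.le _)
            apply Real.rpow_le_rpow_of_exponent_le hμ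
            rw [mul_one_div, ← hcast]
            exact hadt
        _ = μ ^ N0 * ((μ ^ (1 / Na : ℝ)) ^ (t - s) * lamS ^ (t - s)) := by
            rw [Real.rpow_add hμ0, mul_assoc]
            congr 2
            rw [mul_comm ((t - s : ℕ) : ℝ) (1 / Na), Real.rpow_mul hμ0.le,
              Real.rpow_natCast]
        _ ≤ μ ^ N0 * δ ^ (t - s) := by
            apply mul_le_mul_of_nonneg_left _ hμN0pos.le
            rw [← mul_pow]
            exact pow_le_pow_left₀ (by positivity) hratio _
    -- step identity for the invariant bound
    have hTstep : ∀ (k r : ℕ), r ≤ k →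
        μ ^ (switchCountD sg r (k + 1)) * lamS ^ (k + 1 - r) * ω
          + A * ∑ j ∈ Finset.Ico r (k + 1),
              μ ^ (switchCountD sg j (k + 1)) * lamS ^ (k + 1 - 1 - j)
        = (if sg k = sg (k + 1) then (1:ℝ) else μ) *
            (lamS * (μ ^ (switchCountD sg r k) * lamS ^ (k - r) * ω
              + A * ∑ j ∈ Finset.Ico r k,
                  μ ^ (switchCountD sg j k) * lamS ^ (k - 1 - j)) + A) := by
      intro k r hrk
      set c : ℝ := if sg k = sg (k + 1) then (1:ℝ) else μ with hc
      have hpowc : ∀ j, j ≤ k → (μ : ℝ) ^ (switchCountD sg j (k + 1))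
          = μ ^ (switchCountD sg j k) * c := by
        intro j hj
        rw [scd_succ sg hj]
        by_cases hsw : sg k = sg (k + 1) <;> simp [hc, hsw, pow_succ]
      have hsum : ∑ j ∈ Finset.Ico r (k + 1),
            μ ^ (switchCountD sg j (k + 1)) * lamS ^ (k + 1 - 1 - j)
          = (∑ j ∈ Finset.Ico r k, μ ^ (switchCountD sg j k) * lamS ^ (k - 1 - j))
              * (c * lamS) + c := by
        rw [Finset.sum_Ico_succ_top hrk]
        have hfk : μ ^ (switchCountD sg k (k + 1)) * lamS ^ (k + 1 - 1 - k) = c := by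
          rw [scd_succ sg (le_refl k), scd_self]
          have he : k + 1 - 1 - k = 0 := by omega
          rw [he, pow_zero, mul_one]
          by_cases hsw : sg k = sg (k + 1) <;> simp [hc, hsw]
        rw [hfk]
        congr 1
        rw [Finset.sum_mul]
        apply Finset.sum_congr rfl
        intro j hj
        have hjk : j < k := (Finset.mem_Ico.mp hj).2
        rw [hpowc j hjk.le]
        have h1 : k + 1 - 1 - j = (k - 1 - j) + 1 := by omega
        rw [h1, pow_succ]
        ring
      rw [hsum, hpowc r hrk]
      have h2 : k + 1 - r = (k - r) + 1 := by omega
      rw [h2, pow_succ]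
      ring
    -- the invariant
    have hinv : ∀ k, ∃ r, r ≤ k ∧ V (sg k) (x k) ≤
        μ ^ (switchCountD sg r k) * lamS ^ (k - r) * ω
          + A * ∑ j ∈ Finset.Ico r k, μ ^ (switchCountD sg j k) * lamS ^ (k - 1 - j) := by
      intro k
      induction k with
      | zero =>
        refine ⟨0, le_refl 0, ?_⟩
        rw [scd_self, Finset.Ico_self, Finset.sum_empty, pow_zero, Nat.sub_self, pow_zero,
          mul_zero, add_zero, one_mul, one_mul]
        exact Set.mem_iInter.mp hx0 (sg 0)
      | succ k ih =>
        obtain ⟨r, hrk, hV⟩ := ih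
        set T : ℝ := μ ^ (switchCountD sg r k) * lamS ^ (k - r) * ω
          + A * ∑ j ∈ Finset.Ico r k, μ ^ (switchCountD sg j k) * lamS ^ (k - 1 - j) with hT
        have hstep2 : V (sg k) (x (k + 1)) ≤ lamS * T + A := by
          have h1 := hstep k
          have h2 := mul_le_mul_of_nonneg_left hV hlamS_pos.le
          linarith
        by_cases hsw : sg k = sg (k + 1)
        · refine ⟨r, hrk.trans (Nat.le_succ k), ?_⟩
          rw [hTstep k r hrk, if_pos hsw, one_mul]
          calc V (sg (k + 1)) (x (k + 1)) = V (sg k) (x (k + 1)) := by rw [← hsw]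
            _ ≤ lamS * T + A := hstep2
        · by_cases hκV : κ ≤ V (sg k) (x (k + 1))
          · refine ⟨r, hrk.trans (Nat.le_succ k), ?_⟩
            rw [hTstep k r hrk, if_neg hsw]
            calc V (sg (k + 1)) (x (k + 1)) ≤ μ * V (sg k) (x (k + 1)) :=
                  hμb (sg k) (sg (k + 1)) (x (k + 1)) hκV
              _ ≤ μ * (lamS * T + A) := mul_le_mul_of_nonneg_left hstep2 hμ0.le
          · push_neg at hκV
            refine ⟨k + 1, le_refl _, ?_⟩
            rw [scd_self, Finset.Ico_self, Finset.sum_empty, Nat.sub_self, pow_zero, pow_zero,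
              mul_zero, add_zero, one_mul, one_mul]
            exact hωb (sg (k + 1)) (x (k + 1)) ⟨sg k, hκV.le⟩
    -- conclude
    intro k
    rcases Nat.eq_zero_or_pos k with rfl | hkpos
    · refine ⟨sg 0, ?_⟩
      have h0 : V (sg 0) (x 0) ≤ ω := Set.mem_iInter.mp hx0 (sg 0)
      have h1 : ω ≤ μ ^ N0 * ω := le_mul_of_one_le_left hωnn hμN0one
      have h2 : 0 ≤ μ ^ N0 / (1 - δ) * A :=
        mul_nonneg (div_nonneg hμN0pos.le (by linarith)) hA0
      linarith
    obtain ⟨M, rfl⟩ : ∃ M, k = M + 1 := ⟨k - 1, by omega⟩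
    obtain ⟨r, hrm, hV⟩ := hinv M
    refine ⟨sg M, ?_⟩
    set S : ℝ := ∑ j ∈ Finset.Ico r M, μ ^ (switchCountD sg j M) * lamS ^ (M - 1 - j) with hS
    -- first piece
    have e1 : lamS * (μ ^ (switchCountD sg r M) * lamS ^ (M - r) * ω) ≤ μ ^ N0 * ω := by
      have h1 := hkey r M hrm
      have h2 : δ ^ (M - r) ≤ 1 := pow_le_one₀ hδ0.le hδ2.le
      have hXnn : 0 ≤ μ ^ (switchCountD sg r M) * lamS ^ (M - r) := by positivity
      calc lamS * (μ ^ (switchCountD sg r M) * lamS ^ (M - r) * ω)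
          ≤ 1 * (μ ^ (switchCountD sg r M) * lamS ^ (M - r) * ω) := by
            apply mul_le_mul_of_nonneg_right hlamS_lt1.le (by positivity)
        _ = μ ^ (switchCountD sg r M) * lamS ^ (M - r) * ω := one_mul _
        _ ≤ (μ ^ N0 * δ ^ (M - r)) * ω := mul_le_mul_of_nonneg_right h1 hωnn
        _ = μ ^ N0 * (δ ^ (M - r) * ω) := by ring
        _ ≤ μ ^ N0 * (1 * ω) := by
            apply mul_le_mul_of_nonneg_left _ hμN0pos.le
            exact mul_le_mul_of_nonneg_right h2 hωnn
        _ = μ ^ N0 * ω := by ring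
    -- sum piece
    have e2 : lamS * S + 1 ≤ μ ^ N0 * (1 / (1 - δ)) := by
      have hterm : ∀ j ∈ Finset.Ico r M,
          (μ ^ (switchCountD sg j M) * lamS ^ (M - 1 - j)) * lamS ≤ μ ^ N0 * δ ^ (M - j) := by
        intro j hj
        have hjm : j < M := (Finset.mem_Ico.mp hj).2
        have he : (μ:ℝ) ^ (switchCountD sg j M) * lamS ^ (M - 1 - j) * lamS
            = μ ^ (switchCountD sg j M) * lamS ^ (M - j) := by
          rw [mul_assoc, ← pow_succ]
          have h1 : M - 1 - j + 1 = M - j := by omega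
          rw [h1]
        rw [he]
        exact hkey j M hjm.le
      have hSsum : lamS * S ≤ μ ^ N0 * ∑ j ∈ Finset.Ico r M, δ ^ (M - j) := by
        rw [hS, Finset.mul_sum, Finset.mul_sum]
        apply Finset.sum_le_sum
        intro j hj
        calc lamS * (μ ^ (switchCountD sg j M) * lamS ^ (M - 1 - j))
            = (μ ^ (switchCountD sg j M) * lamS ^ (M - 1 - j)) * lamS := by ring
          _ ≤ μ ^ N0 * δ ^ (M - j) := hterm j hj
      have hδsum : ∑ j ∈ Finset.Ico r M, δ ^ (M - j)
          = δ * ∑ i ∈ Finset.range (M - r), δ ^ i := by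
        rw [Finset.sum_Ico_eq_sum_range]
        have h1 : ∀ i ∈ Finset.range (M - r), δ ^ (M - (r + i)) = δ ^ ((M - r) - 1 - i + 1) := by
          intro i hi
          have := Finset.mem_range.mp hi
          congr 1
          omega
        rw [Finset.sum_congr rfl h1, Finset.sum_range_reflect (fun i => δ ^ (i + 1)) (M - r)]
        rw [Finset.mul_sum]
        apply Finset.sum_congr rfl
        intro i _
        rw [pow_succ]
        ring
      have hgeom : δ * ∑ i ∈ Finset.range (M - r), δ ^ i + 1 ≤ 1 / (1 - δ) := by
        have := geom_sum_le_div hδ0 hδ2 (M - r + 1)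
        rw [geom_sum_succ] at this
        linarith
      calc lamS * S + 1 ≤ μ ^ N0 * (δ * ∑ i ∈ Finset.range (M - r), δ ^ i) + 1 := by
            rw [← hδsum]; linarith
        _ ≤ μ ^ N0 * (δ * ∑ i ∈ Finset.range (M - r), δ ^ i) + μ ^ N0 := by linarith
        _ = μ ^ N0 * (δ * ∑ i ∈ Finset.range (M - r), δ ^ i + 1) := by ring
        _ ≤ μ ^ N0 * (1 / (1 - δ)) := mul_le_mul_of_nonneg_left hgeom hμN0pos.le
    -- assemble
    have hb := hstep M
    have h2 := mul_le_mul_of_nonneg_left hV hlamS_pos.le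
    have e2' : lamS * (A * S) + A ≤ μ ^ N0 / (1 - δ) * A := by
      have h3 : A * (lamS * S + 1) ≤ A * (μ ^ N0 * (1 / (1 - δ))) :=
        mul_le_mul_of_nonneg_left e2 hA0
      calc lamS * (A * S) + A = A * (lamS * S + 1) := by ring
        _ ≤ A * (μ ^ N0 * (1 / (1 - δ))) := h3
        _ = μ ^ N0 / (1 - δ) * A := by ring
    calc V (sg M) (x (M + 1)) ≤ lamS * V (sg M) (x M) + A := hb
      _ ≤ lamS * (μ ^ (switchCountD sg r M) * lamS ^ (M - r) * ω + A * S) + A := by linarith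
      _ = lamS * (μ ^ (switchCountD sg r M) * lamS ^ (M - r) * ω) + (lamS * (A * S) + A) := by
          ring
      _ ≤ μ ^ N0 * ω + μ ^ N0 / (1 - δ) * A := add_le_add e1 e2'
end

section
/- Practically stable initial set for switched continuous systems (Corollary 4): Set λ := min_{p∈P} λ_p > 0 and α̂(s) := max_{p∈P} α_p(s), and fix δ ∈ (0, λ). Then the set S := ⋂_{p∈P} { x ∈ ℝ^n : V_p(x) ≤ ω } is nonempty and compact, and for every switching signal σ with average dwell time N_a ≥ ln(μ)/(λ−δ) and chatter bound N_0 ≥ 1, every bounded piecewise-continuous disturbance d, and every solution x : [0,∞) → ℝ^n of the switched system with x(0) ∈ S: for every t ≥ 0 there exists p ∈ P with V_p(x(t)) ≤ μ^{1+N_0}·ω + (μ^{1+N_0}/δ)·α̂(‖d‖∞). -/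
open Set Real



/-- A locally finite subset of `ℝ`: finitely many points in every compact interval. -/
def LocFin (T : Set ℝ) : Prop := ∀ a b : ℝ, (T ∩ Set.Icc a b).Finite

/-- `sg` is piecewise constant and right-continuous with switching-instant set `T`:
it is constant along any interval containing no switching instant `(s, t] ∩ T = ∅`. -/
def PCOn {P : Type} (sg : ℝ → P) (T : Set ℝ) : Prop :=
  ∀ s t : ℝ, s ≤ t → Set.Ioc s t ∩ T = ∅ → sg s = sg t

/-- Number of switching instants in `[tl, t)`. -/
noncomputable def switchCountC (T : Set ℝ) (tl t : ℝ) : ℕ := (T ∩ Set.Ico tl t).ncard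

/-- The switching-instant set `T` satisfies the average dwell-time bound with average
dwell time `Na` and chatter bound `N0`. -/
def HasADTC (T : Set ℝ) (N0 Na : ℝ) : Prop :=
  ∀ tl t : ℝ, 0 ≤ tl → tl ≤ t → (switchCountC T tl t : ℝ) ≤ N0 + (t - tl) / Na

/-- The supremum norm of a signal over `[0, ∞)`. -/
noncomputable def supNorm {m : ℕ} (d : ℝ → EuclideanSpace ℝ (Fin m)) : ℝ :=
  sSup ((fun t => ‖d t‖) '' Set.Ici 0)


lemma aux_antitone_of_finite_exceptions {E : Set ℝ} (hE : E.Finite) :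
    ∀ (k : ℕ) (g : ℝ → ℝ) (a b : ℝ), a ≤ b → (E ∩ Set.Ioo a b).ncard = k →
    ContinuousOn g (Set.Icc a b) →
    (∀ r ∈ Set.Ioo a b, r ∉ E → ∃ g', HasDerivAt g g' r ∧ g' ≤ 0) →
    g b ≤ g a := by
  intro k
  induction k using Nat.strong_induction_on with
  | _ k IH =>
    intro g a b hab hcard hcont hderiv
    by_cases hemp : E ∩ Set.Ioo a b = ∅
    · have hanti : AntitoneOn g (Set.Icc a b) := by
        apply antitoneOn_of_deriv_nonpos (convex_Icc a b) hcont
        · intro r hr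
          rw [interior_Icc] at hr
          have hrE : r ∉ E := fun h => by
            have : r ∈ E ∩ Set.Ioo a b := ⟨h, hr⟩
            simp [hemp] at this
          obtain ⟨g', hg', _⟩ := hderiv r hr hrE
          exact hg'.differentiableAt.differentiableWithinAt
        · intro r hr
          rw [interior_Icc] at hr
          have hrE : r ∉ E := fun h => by
            have : r ∈ E ∩ Set.Ioo a b := ⟨h, hr⟩
            simp [hemp] at this
          obtain ⟨g', hg', hle⟩ := hderiv r hr hrE
          rw [hg'.deriv]; exact hle
      exact hanti (left_mem_Icc.2 hab) (right_mem_Icc.2 hab) hab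
    · have hfin : (E ∩ Set.Ioo a b).Finite := hE.inter_of_left _
      have hne : hfin.toFinset.Nonempty := by
        rw [Set.Finite.toFinset_nonempty]
        exact Set.nonempty_iff_ne_empty.2 hemp
      set e := hfin.toFinset.min' hne with he_def
      have hemem : e ∈ E ∩ Set.Ioo a b := hfin.mem_toFinset.1 (hfin.toFinset.min'_mem hne)
      have hmin : ∀ w ∈ E ∩ Set.Ioo a b, e ≤ w := fun w hw =>
        hfin.toFinset.min'_le w (hfin.mem_toFinset.2 hw)
      have hae : a < e := hemem.2.1
      have heb : e < b := hemem.2.2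
      have hkpos : 0 < k := by
        rw [← hcard]
        exact (Set.ncard_pos hfin).2 (Set.nonempty_iff_ne_empty.2 hemp)
      -- g e ≤ g a on [a, e]
      have h1 : g e ≤ g a := by
        apply IH 0 hkpos g a e hae.le
        · rw [Set.ncard_eq_zero (hE.inter_of_left _)]
          ext w; simp only [Set.mem_inter_iff, Set.mem_Ioo, Set.mem_empty_iff_false, iff_false]
          rintro ⟨hw, hw1, hw2⟩
          exact absurd (hmin w ⟨hw, hw1, hw2.trans heb⟩) (not_le.2 hw2)
        · exact hcont.mono (Set.Icc_subset_Icc le_rfl heb.le)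
        · intro r hr hrE
          exact hderiv r ⟨hr.1, hr.2.trans heb⟩ hrE
      -- g b ≤ g e on [e, b]
      have h2 : g b ≤ g e := by
        have hset : E ∩ Set.Ioo e b = (E ∩ Set.Ioo a b) \ {e} := by
          ext w
          simp only [Set.mem_inter_iff, Set.mem_Ioo, Set.mem_diff, Set.mem_singleton_iff]
          constructor
          · rintro ⟨hw, hw1, hw2⟩
            exact ⟨⟨hw, hae.trans hw1, hw2⟩, ne_of_gt hw1⟩
          · rintro ⟨⟨hw, hw1, hw2⟩, hwe⟩
            exact ⟨hw, lt_of_le_of_ne (hmin w ⟨hw, hw1, hw2⟩) (Ne.symm hwe), hw2⟩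
        have hcard2 : (E ∩ Set.Ioo e b).ncard = k - 1 := by
          rw [hset, Set.ncard_diff_singleton_of_mem hemem, hcard]
        apply IH (k-1) (Nat.sub_lt hkpos one_pos) g e b heb.le hcard2
        · exact hcont.mono (Set.Icc_subset_Icc hae.le le_rfl)
        · intro r hr hrE
          exact hderiv r ⟨hae.trans hr.1, hr.2⟩ hrE
      linarith

lemma aux_decay_est {W : ℝ → ℝ} {a b lam A : ℝ} {E : Set ℝ} (hE : E.Finite)
    (hlam : 0 < lam) (hab : a ≤ b) (hW : ContinuousOn W (Set.Icc a b))
    (hW' : ∀ r ∈ Set.Ioo a b, r ∉ E → ∃ W', HasDerivAt W W' r ∧ W' ≤ -lam * W r + A) :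
    W b ≤ Real.exp (-lam * (b - a)) * W a + A / lam * (1 - Real.exp (-lam * (b - a))) := by
  set g : ℝ → ℝ := fun r => Real.exp (lam * r) * W r - A / lam * Real.exp (lam * r) with hg_def
  have hgba : g b ≤ g a := by
    apply aux_antitone_of_finite_exceptions hE (E ∩ Set.Ioo a b).ncard g a b hab rfl
    · apply ContinuousOn.sub
      · exact ((Real.continuous_exp.comp (continuous_const.mul continuous_id)).continuousOn).mul hW
      · exact continuousOn_const.mul
          (Real.continuous_exp.comp (continuous_const.mul continuous_id)).continuousOn
    · intro r hr hrE
      obtain ⟨W', hW'r, hW'le⟩ := hW' r hr hrE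
      have hexp : HasDerivAt (fun s => Real.exp (lam * s)) (Real.exp (lam * r) * lam) r := by
        simpa [mul_one] using ((hasDerivAt_id r).const_mul lam).exp
      refine ⟨Real.exp (lam * r) * lam * W r + Real.exp (lam * r) * W' -
        A / lam * (Real.exp (lam * r) * lam), (hexp.mul hW'r).sub (hexp.const_mul (A / lam)), ?_⟩
      have hepos : (0:ℝ) < Real.exp (lam * r) := Real.exp_pos _
      have h2 : Real.exp (lam * r) * W' ≤ Real.exp (lam * r) * (-lam * W r + A) :=
        mul_le_mul_of_nonneg_left hW'le hepos.le
      have hAl : A / lam * (Real.exp (lam * r) * lam) = A * Real.exp (lam * r) := by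
        field_simp
      nlinarith [h2]
  -- unfold g and rearrange
  have hea : Real.exp (lam * a) = Real.exp (-lam * (b - a)) * Real.exp (lam * b) := by
    rw [← Real.exp_add]; ring_nf
  have hebpos : (0:ℝ) < Real.exp (lam * b) := Real.exp_pos _
  rw [hg_def] at hgba
  simp only at hgba
  rw [hea] at hgba
  nlinarith [hgba]

/-- `(1 - e^{-λΔ})/λ` is decreasing in `λ`. -/
lemma aux_exp_ratio {δ lam Δ : ℝ} (hδ : 0 < δ) (hδlam : δ ≤ lam) (hΔ : 0 ≤ Δ) :
    (1 - Real.exp (-lam * Δ)) / lam ≤ (1 - Real.exp (-δ * Δ)) / δ := by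
  have hlam : 0 < lam := lt_of_lt_of_le hδ hδlam
  rw [div_le_div_iff₀ hlam hδ]
  set F : ℝ → ℝ := fun r => lam * (1 - Real.exp (-δ * r)) - δ * (1 - Real.exp (-lam * r))
    with hF_def
  have hF' : ∀ r : ℝ, HasDerivAt F
      (lam * δ * Real.exp (-δ * r) - δ * lam * Real.exp (-lam * r)) r := by
    intro r
    have h1 : HasDerivAt (fun s => Real.exp (-δ * s)) (Real.exp (-δ * r) * (-δ * 1)) r :=
      ((hasDerivAt_id r).const_mul (-δ)).exp
    have h2 : HasDerivAt (fun s => Real.exp (-lam * s)) (Real.exp (-lam * r) * (-lam * 1)) r :=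
      ((hasDerivAt_id r).const_mul (-lam)).exp
    have h := (((hasDerivAt_const r (1:ℝ)).sub h1).const_mul lam).sub
      (((hasDerivAt_const r (1:ℝ)).sub h2).const_mul δ)
    exact h.congr_deriv (by ring)
  have hmono : MonotoneOn F (Set.Ici 0) := by
    apply monotoneOn_of_deriv_nonneg (convex_Ici 0)
    · exact (Continuous.continuousOn (by continuity))
    · intro r _
      exact (hF' r).differentiableAt.differentiableWithinAt
    · intro r hr
      rw [interior_Ici] at hr
      rw [(hF' r).deriv]
      have hee : Real.exp (-lam * r) ≤ Real.exp (-δ * r) := by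
        apply Real.exp_le_exp.2
        have hr' : (0:ℝ) < r := hr
        nlinarith
      nlinarith [mul_le_mul_of_nonneg_left hee (mul_pos hlam hδ).le]
  have h0 : F 0 = 0 := by simp [hF_def]
  have := hmono (Set.self_mem_Ici) (Set.mem_Ici.2 hΔ) hΔ
  rw [h0] at this
  simp only [hF_def] at this
  nlinarith [this]

set_option maxHeartbeats 3000000 in
/-- Corollary 4: practically stable initial set for switched continuous systems. -/
theorem practically_stable_initial_set_continuous
    (n m : ℕ) (P : Type) [Fintype P] [Nonempty P]
    (f : P → EuclideanSpace ℝ (Fin n) → EuclideanSpace ℝ (Fin m) → EuclideanSpace ℝ (Fin n))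
    (hf : ∀ p, LocallyLipschitz fun xu : EuclideanSpace ℝ (Fin n) × EuclideanSpace ℝ (Fin m) =>
      f p xu.1 xu.2)
    (xstar : P → EuclideanSpace ℝ (Fin n))
    (hfix : ∀ p, f p (xstar p) 0 = 0)
    (V : P → EuclideanSpace ℝ (Fin n) → ℝ)
    (hVsmooth : ∀ p, ContDiff ℝ 1 (V p))
    (hVnonneg : ∀ p x, 0 ≤ V p x)
    (alow aup ain : P → ℝ → ℝ)
    (halow : ∀ p, IsClassKInf (alow p)) (haup : ∀ p, IsClassKInf (aup p))
    (hain : ∀ p, IsClassKInf (ain p))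
    (lam : P → ℝ) (hlam : ∀ p, 0 < lam p)
    (hsandwich : ∀ p x, alow p ‖x - xstar p‖ ≤ V p x ∧ V p x ≤ aup p ‖x - xstar p‖)
    (hdecr : ∀ p x u, fderiv ℝ (V p) x (f p x u) ≤ -lam p * V p x + ain p ‖u‖)
    (κ : ℝ) (hκ : 0 < κ)
    (μ : ℝ) (hμ : 1 ≤ μ)
    (hμb : ∀ (p q : P) (x : EuclideanSpace ℝ (Fin n)), κ ≤ V p x → V q x ≤ μ * V p x)
    (ω : ℝ) (hω : 0 < ω)
    (hωb : ∀ (p : P) (x : EuclideanSpace ℝ (Fin n)), (∃ q : P, V q x ≤ κ) → V p x ≤ ω)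
    (δ : ℝ) (hδ0 : 0 < δ) (hδ1 : δ < Finset.univ.inf' Finset.univ_nonempty lam) :
    (⋂ p : P, {x : EuclideanSpace ℝ (Fin n) | V p x ≤ ω}).Nonempty ∧
    IsCompact (⋂ p : P, {x : EuclideanSpace ℝ (Fin n) | V p x ≤ ω}) ∧
    ∀ (sg : ℝ → P) (T : Set ℝ), LocFin T → PCOn sg T →
      ∀ N0 Na : ℝ, 1 ≤ N0 → 0 < Na →
        Real.log μ / (Finset.univ.inf' Finset.univ_nonempty lam - δ) ≤ Na →
        HasADTC T N0 Na →
        ∀ (d : ℝ → EuclideanSpace ℝ (Fin m)) (Dd : Set ℝ), LocFin Dd →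
          ContinuousOn d (Set.Ici 0 \ Dd) →
          BddAbove ((fun t => ‖d t‖) '' Set.Ici 0) →
          ∀ x : ℝ → EuclideanSpace ℝ (Fin n),
            ContinuousOn x (Set.Ici 0) →
            (∀ t : ℝ, 0 ≤ t → t ∉ T → t ∉ Dd →
              HasDerivAt x (f (sg t) (x t) (d t)) t) →
            x 0 ∈ ⋂ p : P, {y : EuclideanSpace ℝ (Fin n) | V p y ≤ ω} →
            ∀ t : ℝ, 0 ≤ t → ∃ p : P,
              V p (x t) ≤ μ ^ (1 + N0) * ω +
                μ ^ (1 + N0) / δ *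
                  (Finset.univ.sup' Finset.univ_nonempty fun q => ain q (supNorm d)) := by
  classical
  set lamm := Finset.univ.inf' Finset.univ_nonempty lam with hlamm_def
  have hlamm : 0 < lamm := (Finset.lt_inf'_iff _).2 fun p _ => hlam p
  have hlamm_le : ∀ p, lamm ≤ lam p := fun p => Finset.inf'_le _ (Finset.mem_univ p)
  -- the fixed points have V value 0
  have hVfix : ∀ p : P, V p (xstar p) = 0 := by
    intro p
    have h1 := hdecr p (xstar p) 0
    rw [hfix p] at h1
    simp only [map_zero, norm_zero] at h1
    rw [(hain p).2.2.1] at h1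
    have := hVnonneg p (xstar p)
    nlinarith [hlam p]
  have p0 : P := Classical.arbitrary P
  have hmemS : xstar p0 ∈ ⋂ p : P, {x : EuclideanSpace ℝ (Fin n) | V p x ≤ ω} := by
    rw [Set.mem_iInter]
    intro p
    exact hωb p (xstar p0) ⟨p0, by rw [hVfix p0]; exact hκ.le⟩
  refine ⟨⟨xstar p0, hmemS⟩, ?_, ?_⟩
  · -- compactness
    have hclosed : IsClosed (⋂ p : P, {x : EuclideanSpace ℝ (Fin n) | V p x ≤ ω}) :=
      isClosed_iInter fun p => isClosed_le (hVsmooth p).continuous continuous_const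
    obtain ⟨R0, hR0⟩ := (Filter.tendsto_atTop.1 (halow p0).2.2.2 (ω + 1)).exists_forall_of_atTop
    set R := max R0 0 with hR_def
    have hRω : ω < alow p0 R := by
      have := hR0 R (le_max_left _ _)
      linarith
    apply Metric.isCompact_of_isClosed_isBounded hclosed
    apply (Metric.isBounded_closedBall (x := xstar p0) (r := R)).subset
    intro y hy
    rw [Set.mem_iInter] at hy
    have h1 : alow p0 ‖y - xstar p0‖ ≤ ω := le_trans (hsandwich p0 y).1 (hy p0)
    rw [Metric.mem_closedBall, dist_eq_norm]
    by_contra hcon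
    push_neg at hcon
    have := (halow p0).2.1 (Set.mem_Ici.2 (le_max_right R0 0)) (Set.mem_Ici.2 (norm_nonneg _)) hcon
    linarith
  · intro sg T hT hPC N0 Na hN0 hNa0 hNalog hADT d Dd hDd hdcont hdbdd x hxcont hxderiv hx0 t ht
    set Ahat := Finset.univ.sup' Finset.univ_nonempty (fun q => ain q (supNorm d)) with hAhat_def
    set K := μ ^ (1 + N0) with hK_def
    have hμpos : (0:ℝ) < μ := lt_of_lt_of_le one_pos hμ
    have hsupd0 : 0 ≤ supNorm d :=
      le_trans (norm_nonneg _) (le_csSup hdbdd ⟨0, Set.self_mem_Ici, rfl⟩)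
    have hain_mono : ∀ p : P, ∀ r, 0 ≤ r → r ≤ supNorm d → ain p r ≤ ain p (supNorm d) :=
      fun p r hr hrs => ((hain p).2.1.monotoneOn) (Set.mem_Ici.2 hr) (Set.mem_Ici.2 hsupd0) hrs
    have hAhat_ge : ∀ p : P, ain p (supNorm d) ≤ Ahat := by
      intro p
      rw [hAhat_def]
      exact Finset.le_sup' (fun q => ain q (supNorm d)) (Finset.mem_univ p)
    have hAhat0 : (0:ℝ) ≤ Ahat := by
      have h := hain_mono p0 0 le_rfl hsupd0
      rw [(hain p0).2.2.1] at h
      exact le_trans h (hAhat_ge p0)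
    have hain_le : ∀ p : P, ∀ r : ℝ, 0 ≤ r → ain p ‖d r‖ ≤ Ahat := by
      intro p r hr
      exact le_trans (hain_mono p _ (norm_nonneg _) (le_csSup hdbdd ⟨r, hr, rfl⟩)) (hAhat_ge p)
    have hμN0K : μ ^ N0 ≤ K := by
      rw [hK_def]
      exact Real.rpow_le_rpow_of_exponent_le hμ (by linarith)
    have hK1 : (1:ℝ) ≤ K := by
      rw [hK_def]
      calc (1:ℝ) = μ ^ (0:ℝ) := (Real.rpow_zero μ).symm
      _ ≤ μ ^ (1 + N0) := Real.rpow_le_rpow_of_exponent_le hμ (by linarith)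
    have hlogμ : Real.log μ ≤ Na * (lamm - δ) := by
      rw [div_le_iff₀ (by linarith : (0:ℝ) < lamm - δ)] at hNalog
      linarith
    have hcount : ∀ s : ℝ, 0 ≤ s → s ≤ t → ((T ∩ Set.Ioc s t).ncard : ℝ) ≤ N0 + (t - s) / Na := by
      intro s hs0 hst
      apply le_of_forall_pos_le_add
      intro ε hε
      have hsub : T ∩ Set.Ioc s t ⊆ T ∩ Set.Ico s (t + ε * Na) := by
        rintro w ⟨hw, hw1, hw2⟩
        exact ⟨hw, hw1.le, lt_of_le_of_lt hw2 (by nlinarith)⟩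
      have hfin2 : (T ∩ Set.Ico s (t + ε * Na)).Finite :=
        (hT s (t + ε * Na)).subset (Set.inter_subset_inter_right _ Set.Ico_subset_Icc_self)
      have h1 : ((T ∩ Set.Ioc s t).ncard : ℝ) ≤ ((T ∩ Set.Ico s (t + ε * Na)).ncard : ℝ) :=
        Nat.cast_le.2 (Set.ncard_le_ncard hsub hfin2)
      have h2 := hADT s (t + ε * Na) hs0 (by nlinarith)
      simp only [switchCountC] at h2
      have h3 : (t + ε * Na - s) / Na = (t - s) / Na + ε := by
        field_simp
        ring
      linarith
    have hmupow : ∀ s : ℝ, 0 ≤ s → s ≤ t →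
        (μ : ℝ) ^ ((T ∩ Set.Ioc s t).ncard : ℕ) ≤ μ ^ N0 * Real.exp ((lamm - δ) * (t - s)) := by
      intro s hs0 hst
      rw [← Real.rpow_natCast μ ((T ∩ Set.Ioc s t).ncard)]
      calc μ ^ (((T ∩ Set.Ioc s t).ncard : ℕ) : ℝ)
          ≤ μ ^ (N0 + (t - s) / Na) := Real.rpow_le_rpow_of_exponent_le hμ (hcount s hs0 hst)
        _ = μ ^ N0 * μ ^ ((t - s) / Na) := Real.rpow_add hμpos _ _
        _ ≤ μ ^ N0 * Real.exp ((lamm - δ) * (t - s)) := by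
            apply mul_le_mul_of_nonneg_left _ (Real.rpow_nonneg hμpos.le _)
            rw [Real.rpow_def_of_pos hμpos]
            apply Real.exp_le_exp.2
            have hts : (0:ℝ) ≤ t - s := by linarith
            calc Real.log μ * ((t - s) / Na) ≤ (Na * (lamm - δ)) * ((t - s) / Na) :=
              mul_le_mul_of_nonneg_right hlogμ (div_nonneg hts hNa0.le)
            _ = (lamm - δ) * (t - s) := by field_simp
    have hgron : ∀ (p : P) (a b : ℝ), 0 ≤ a → a ≤ b → (∀ r ∈ Set.Ico a b, sg r = p) →
        V p (x b) ≤ Real.exp (-lamm * (b - a)) * V p (x a) +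
          Ahat / lamm * (1 - Real.exp (-lamm * (b - a))) := by
      intro p a b ha0 hab hsgp
      refine aux_decay_est (W := fun r => V p (x r)) (E := (T ∪ Dd) ∩ Set.Icc a b) ?_ hlamm hab
        ?_ ?_
      · rw [Set.union_inter_distrib_right]
        exact ((hT a b).union (hDd a b))
      · exact (hVsmooth p).continuous.comp_continuousOn
          (hxcont.mono (fun r hr => Set.mem_Ici.2 (le_trans ha0 hr.1)))
      · intro r hr hrE
        have hr0 : 0 ≤ r := le_trans ha0 hr.1.le
        have hrT : r ∉ T := fun h => hrE ⟨Or.inl h, hr.1.le, hr.2.le⟩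
        have hrD : r ∉ Dd := fun h => hrE ⟨Or.inr h, hr.1.le, hr.2.le⟩
        have hx' := hxderiv r hr0 hrT hrD
        rw [hsgp r ⟨hr.1.le, hr.2⟩] at hx'
        refine ⟨fderiv ℝ (V p) (x r) (f p (x r) (d r)), ?_, ?_⟩
        · exact (((hVsmooth p).differentiable one_ne_zero (x r)).hasFDerivAt).comp_hasDerivAt r hx'
        · have h2 : -lam p * V p (x r) ≤ -lamm * V p (x r) := by
            nlinarith [hVnonneg p (x r), hlamm_le p]
          have h3 := hain_le p r hr0
          have := hdecr p (x r) (d r)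
          linarith
    have main : ∀ k : ℕ, ∀ s : ℝ, 0 ≤ s → s ≤ t → (T ∩ Set.Ioc s t).ncard = k →
        V (sg t) (x t) ≤ max ((μ:ℝ) ^ k * Real.exp (-lamm * (t - s)) * V (sg s) (x s)) (K * ω)
          + K * Ahat / δ * (1 - Real.exp (-δ * (t - s))) := by
      intro k
      induction k using Nat.strong_induction_on with
      | _ k IH =>
        intro s hs0 hst hcard
        by_cases hemp : T ∩ Set.Ioc s t = ∅
        · have hsgt : sg s = sg t := hPC s t hst (by rw [Set.inter_comm]; exact hemp)
          have hsgc : ∀ r ∈ Set.Ico s t, sg r = sg s := by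
            intro r hr
            refine (hPC s r hr.1 ?_).symm
            rw [Set.inter_comm]
            apply Set.subset_empty_iff.1
            rw [← hemp]
            exact Set.inter_subset_inter_right _ (Set.Ioc_subset_Ioc le_rfl hr.2.le)
          have hg := hgron (sg s) s t hs0 hst hsgc
          rw [← hsgt]
          have hts : (0:ℝ) ≤ t - s := by linarith
          have he2 : Real.exp (-δ * (t - s)) ≤ 1 := Real.exp_le_one_iff.2 (by nlinarith)
          have hd1 : Ahat / lamm * (1 - Real.exp (-lamm * (t - s))) ≤
              K * Ahat / δ * (1 - Real.exp (-δ * (t - s))) := by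
            have hr1 := aux_exp_ratio hδ0 hδ1.le hts
            calc Ahat / lamm * (1 - Real.exp (-lamm * (t - s)))
                = Ahat * ((1 - Real.exp (-lamm * (t - s))) / lamm) := by ring
              _ ≤ Ahat * ((1 - Real.exp (-δ * (t - s))) / δ) :=
                  mul_le_mul_of_nonneg_left hr1 hAhat0
              _ ≤ K * (Ahat * ((1 - Real.exp (-δ * (t - s))) / δ)) :=
                  le_mul_of_one_le_left
                    (mul_nonneg hAhat0 (div_nonneg (by linarith) hδ0.le)) hK1
              _ = K * Ahat / δ * (1 - Real.exp (-δ * (t - s))) := by ring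
          have hmax : Real.exp (-lamm * (t - s)) * V (sg s) (x s) ≤
              (μ:ℝ) ^ k * Real.exp (-lamm * (t - s)) * V (sg s) (x s) := by
            have h1 : (1:ℝ) ≤ μ ^ k := one_le_pow₀ hμ
            nlinarith [mul_nonneg (Real.exp_pos (-lamm * (t - s))).le (hVnonneg (sg s) (x s))]
          have := le_max_left ((μ:ℝ) ^ k * Real.exp (-lamm * (t - s)) * V (sg s) (x s)) (K * ω)
          linarith
        · have hfin : (T ∩ Set.Ioc s t).Finite :=
            (hT s t).subset (Set.inter_subset_inter_right _ Set.Ioc_subset_Icc_self)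
          have hne : hfin.toFinset.Nonempty := by
            rw [Set.Finite.toFinset_nonempty]
            exact Set.nonempty_iff_ne_empty.2 hemp
          obtain ⟨τ, hτmem, hτmin⟩ : ∃ τ ∈ T ∩ Set.Ioc s t, ∀ w ∈ T ∩ Set.Ioc s t, τ ≤ w := by
            refine ⟨hfin.toFinset.min' hne, hfin.mem_toFinset.1 (hfin.toFinset.min'_mem hne),
              fun w hw => hfin.toFinset.min'_le w (hfin.mem_toFinset.2 hw)⟩
          have hsτ : s < τ := hτmem.2.1
          have hτt : τ ≤ t := hτmem.2.2
          have hτ0 : (0:ℝ) ≤ τ := le_trans hs0 hsτ.le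
          have hkpos : 0 < k := hcard ▸ (Set.ncard_pos hfin).2 (Set.nonempty_iff_ne_empty.2 hemp)
          have hk1 : k - 1 + 1 = k := Nat.succ_pred_eq_of_pos hkpos
          have hsetτ : T ∩ Set.Ioc τ t = (T ∩ Set.Ioc s t) \ {τ} := by
            ext w
            simp only [Set.mem_inter_iff, Set.mem_Ioc, Set.mem_diff, Set.mem_singleton_iff]
            constructor
            · rintro ⟨hw, hw1, hw2⟩
              exact ⟨⟨hw, hsτ.trans hw1, hw2⟩, ne_of_gt hw1⟩
            · rintro ⟨⟨hw, hw1, hw2⟩, hwτ⟩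
              exact ⟨hw, lt_of_le_of_ne (hτmin w ⟨hw, hw1, hw2⟩) (Ne.symm hwτ), hw2⟩
          have hcardτ : (T ∩ Set.Ioc τ t).ncard = k - 1 := by
            rw [hsetτ, Set.ncard_diff_singleton_of_mem hτmem, hcard]
          have hsgc : ∀ r ∈ Set.Ico s τ, sg r = sg s := by
            intro r hr
            refine (hPC s r hr.1 ?_).symm
            rw [Set.eq_empty_iff_forall_notMem]
            rintro w ⟨⟨hw1, hw2⟩, hwT⟩
            have hwt : w ≤ t := le_trans hw2 (le_trans hr.2.le hτt)
            have := hτmin w ⟨hwT, hw1, hwt⟩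
            have : w < τ := lt_of_le_of_lt hw2 hr.2
            linarith [hτmin w ⟨hwT, hw1, hwt⟩]
          have hg1 := hgron (sg s) s τ hs0 hsτ.le hsgc
          have hjump : V (sg τ) (x τ) ≤ max (μ * V (sg s) (x τ)) ω := by
            rcases le_or_gt κ (V (sg s) (x τ)) with h | h
            · exact le_max_of_le_left (hμb (sg s) (sg τ) (x τ) h)
            · exact le_max_of_le_right (hωb (sg τ) (x τ) ⟨sg s, h.le⟩)
          have hIH := IH (k - 1) (Nat.sub_lt hkpos one_pos) τ hτ0 hτt hcardτ
          have hμk' : (μ:ℝ) ^ (k - 1) * Real.exp (-lamm * (t - τ)) ≤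
              μ ^ N0 * Real.exp (-δ * (t - τ)) := by
            have hmu := hmupow τ hτ0 hτt
            rw [hcardτ] at hmu
            have hx1 : Real.exp ((lamm - δ) * (t - τ)) * Real.exp (-lamm * (t - τ)) =
                Real.exp (-δ * (t - τ)) := by
              rw [← Real.exp_add]; congr 1; ring
            calc (μ:ℝ) ^ (k - 1) * Real.exp (-lamm * (t - τ))
                ≤ μ ^ N0 * Real.exp ((lamm - δ) * (t - τ)) * Real.exp (-lamm * (t - τ)) :=
                  mul_le_mul_of_nonneg_right hmu (Real.exp_pos _).le
              _ = μ ^ N0 * Real.exp (-δ * (t - τ)) := by rw [mul_assoc, hx1]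
          have hμN0pos : (0:ℝ) ≤ μ ^ N0 := Real.rpow_nonneg hμpos.le _
          have hpos1 : (0:ℝ) ≤ (μ:ℝ) ^ (k - 1) * Real.exp (-lamm * (t - τ)) := by positivity
          have hpowk : (μ:ℝ) ^ (k - 1) * μ = μ ^ k := by
            rw [← pow_succ, hk1]
          have hτδ1 : Real.exp (-δ * (t - τ)) ≤ 1 := Real.exp_le_one_iff.2
            (by rw [neg_mul]; exact neg_nonpos.2 (mul_nonneg hδ0.le (sub_nonneg.2 hτt)))
          have h_i : (μ:ℝ) ^ (k - 1) * Real.exp (-lamm * (t - τ)) * V (sg τ) (x τ) ≤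
              max ((μ:ℝ) ^ k * Real.exp (-lamm * (t - τ)) * V (sg s) (x τ)) (K * ω) := by
            have h1 := mul_le_mul_of_nonneg_left hjump hpos1
            rw [mul_max_of_nonneg _ _ hpos1] at h1
            apply le_trans h1
            apply max_le_max
            · apply le_of_eq
              rw [← hpowk]; ring
            · apply mul_le_mul_of_nonneg_right _ hω.le
              calc (μ:ℝ) ^ (k - 1) * Real.exp (-lamm * (t - τ))
                  ≤ μ ^ N0 * Real.exp (-δ * (t - τ)) := hμk'
                _ ≤ μ ^ N0 := mul_le_of_le_one_right hμN0pos hτδ1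
                _ ≤ K := hμN0K
          have he12 : Real.exp (-lamm * (t - τ)) * Real.exp (-lamm * (τ - s)) =
              Real.exp (-lamm * (t - s)) := by
            rw [← Real.exp_add]; congr 1; ring
          have h_ii : (μ:ℝ) ^ k * Real.exp (-lamm * (t - τ)) * V (sg s) (x τ) ≤
              (μ:ℝ) ^ k * Real.exp (-lamm * (t - s)) * V (sg s) (x s) +
              (μ:ℝ) ^ k * Real.exp (-lamm * (t - τ)) *
                (Ahat / lamm * (1 - Real.exp (-lamm * (τ - s)))) := by
            have h0 : (0:ℝ) ≤ (μ:ℝ) ^ k * Real.exp (-lamm * (t - τ)) := by positivity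
            calc (μ:ℝ) ^ k * Real.exp (-lamm * (t - τ)) * V (sg s) (x τ)
                ≤ (μ:ℝ) ^ k * Real.exp (-lamm * (t - τ)) *
                  (Real.exp (-lamm * (τ - s)) * V (sg s) (x s) +
                    Ahat / lamm * (1 - Real.exp (-lamm * (τ - s)))) := by
                  rw [mul_assoc, mul_assoc]
                  exact mul_le_mul_of_nonneg_left
                    (mul_le_mul_of_nonneg_left hg1 (Real.exp_pos _).le)
                    (by positivity)
              _ = (μ:ℝ) ^ k * (Real.exp (-lamm * (t - τ)) * Real.exp (-lamm * (τ - s))) *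
                    V (sg s) (x s) + (μ:ℝ) ^ k * Real.exp (-lamm * (t - τ)) *
                    (Ahat / lamm * (1 - Real.exp (-lamm * (τ - s)))) := by ring
              _ = _ := by rw [he12]
          have h_iii : (μ:ℝ) ^ k * Real.exp (-lamm * (t - τ)) *
              (Ahat / lamm * (1 - Real.exp (-lamm * (τ - s)))) ≤
              K * Ahat / δ * (Real.exp (-δ * (t - τ)) - Real.exp (-δ * (t - s))) := by
            have hb1 : (μ:ℝ) ^ k * Real.exp (-lamm * (t - τ)) ≤ K * Real.exp (-δ * (t - τ)) := by
              have hKeq : μ * μ ^ N0 = K := by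
                rw [hK_def, Real.rpow_add hμpos, Real.rpow_one]
              calc (μ:ℝ) ^ k * Real.exp (-lamm * (t - τ))
                  = μ * ((μ:ℝ) ^ (k - 1) * Real.exp (-lamm * (t - τ))) := by
                    rw [← hpowk]; ring
                _ ≤ μ * (μ ^ N0 * Real.exp (-δ * (t - τ))) :=
                    mul_le_mul_of_nonneg_left hμk' hμpos.le
                _ = K * Real.exp (-δ * (t - τ)) := by rw [← hKeq]; ring
            have hratio : (1 - Real.exp (-lamm * (τ - s))) / lamm ≤
                (1 - Real.exp (-δ * (τ - s))) / δ := aux_exp_ratio hδ0 hδ1.le (by linarith)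
            have heτs : Real.exp (-lamm * (τ - s)) ≤ 1 := Real.exp_le_one_iff.2
              (by rw [neg_mul]; exact neg_nonpos.2 (mul_nonneg hlamm.le (sub_nonneg.2 hsτ.le)))
            have heτs2 : Real.exp (-δ * (τ - s)) ≤ 1 := Real.exp_le_one_iff.2
              (by rw [neg_mul]; exact neg_nonpos.2 (mul_nonneg hδ0.le (sub_nonneg.2 hsτ.le)))
            have ht2 : Ahat / lamm * (1 - Real.exp (-lamm * (τ - s))) ≤
                Ahat * ((1 - Real.exp (-δ * (τ - s))) / δ) := by
              calc Ahat / lamm * (1 - Real.exp (-lamm * (τ - s)))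
                  = Ahat * ((1 - Real.exp (-lamm * (τ - s))) / lamm) := by ring
                _ ≤ Ahat * ((1 - Real.exp (-δ * (τ - s))) / δ) :=
                    mul_le_mul_of_nonneg_left hratio hAhat0
            have hnn1 : (0:ℝ) ≤ Ahat / lamm * (1 - Real.exp (-lamm * (τ - s))) :=
              mul_nonneg (div_nonneg hAhat0 hlamm.le) (sub_nonneg.2 heτs)
            have hKE : (0:ℝ) ≤ K * Real.exp (-δ * (t - τ)) := by positivity
            have heprod : Real.exp (-δ * (t - τ)) * Real.exp (-δ * (τ - s)) =
                Real.exp (-δ * (t - s)) := by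
              rw [← Real.exp_add]; congr 1; ring
            calc (μ:ℝ) ^ k * Real.exp (-lamm * (t - τ)) *
                (Ahat / lamm * (1 - Real.exp (-lamm * (τ - s))))
                ≤ (K * Real.exp (-δ * (t - τ))) *
                  (Ahat * ((1 - Real.exp (-δ * (τ - s))) / δ)) := by
                  apply mul_le_mul hb1 ht2 hnn1 hKE
              _ = K * Ahat / δ * (Real.exp (-δ * (t - τ)) -
                    Real.exp (-δ * (t - τ)) * Real.exp (-δ * (τ - s))) := by ring
              _ = K * Ahat / δ * (Real.exp (-δ * (t - τ)) - Real.exp (-δ * (t - s))) := by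
                  rw [heprod]
          have h_iv : max ((μ:ℝ) ^ (k - 1) * Real.exp (-lamm * (t - τ)) * V (sg τ) (x τ)) (K * ω)
              ≤ max ((μ:ℝ) ^ k * Real.exp (-lamm * (t - τ)) * V (sg s) (x τ)) (K * ω) :=
            max_le h_i (le_max_right _ _)
          have hDnn : (0:ℝ) ≤ (μ:ℝ) ^ k * Real.exp (-lamm * (t - τ)) *
              (Ahat / lamm * (1 - Real.exp (-lamm * (τ - s)))) := by
            have heτs : Real.exp (-lamm * (τ - s)) ≤ 1 := Real.exp_le_one_iff.2
              (by rw [neg_mul]; exact neg_nonpos.2 (mul_nonneg hlamm.le (sub_nonneg.2 hsτ.le)))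
            exact mul_nonneg (mul_nonneg (pow_nonneg hμpos.le k) (Real.exp_pos _).le)
              (mul_nonneg (div_nonneg hAhat0 hlamm.le) (sub_nonneg.2 heτs))
          have h_v : max ((μ:ℝ) ^ k * Real.exp (-lamm * (t - τ)) * V (sg s) (x τ)) (K * ω) ≤
              max ((μ:ℝ) ^ k * Real.exp (-lamm * (t - s)) * V (sg s) (x s)) (K * ω) +
              (μ:ℝ) ^ k * Real.exp (-lamm * (t - τ)) *
                (Ahat / lamm * (1 - Real.exp (-lamm * (τ - s)))) := by
            apply max_le
            · exact le_trans h_ii (add_le_add_left (le_max_left _ _) _)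
            · exact le_add_of_le_of_nonneg (le_max_right _ _) hDnn
          have hfinal := le_trans hIH (add_le_add_left h_iv _)
          have hfinal2 := le_trans hfinal (add_le_add_left h_v _)
          -- now combine disturbance terms
          have hADD : (μ:ℝ) ^ k * Real.exp (-lamm * (t - τ)) *
              (Ahat / lamm * (1 - Real.exp (-lamm * (τ - s)))) +
              K * Ahat / δ * (1 - Real.exp (-δ * (t - τ))) ≤
              K * Ahat / δ * (1 - Real.exp (-δ * (t - s))) := by
            linarith [h_iii]
          linarith
    -- conclude
    refine ⟨sg t, ?_⟩
    have hmain := main ((T ∩ Set.Ioc 0 t).ncard) 0 le_rfl ht rfl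
    have hW0 : V (sg 0) (x 0) ≤ ω := by
      rw [Set.mem_iInter] at hx0
      exact hx0 (sg 0)
    have hμk := hmupow 0 le_rfl ht
    have h1 : (μ:ℝ) ^ ((T ∩ Set.Ioc 0 t).ncard) * Real.exp (-lamm * (t - 0)) *
        V (sg 0) (x 0) ≤ K * ω := by
      have hx1 : Real.exp ((lamm - δ) * (t - 0)) * Real.exp (-lamm * (t - 0)) =
          Real.exp (-δ * (t - 0)) := by
        rw [← Real.exp_add]; congr 1; ring
      have ha : (μ:ℝ) ^ ((T ∩ Set.Ioc 0 t).ncard) * Real.exp (-lamm * (t - 0)) ≤ K := by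
        calc (μ:ℝ) ^ ((T ∩ Set.Ioc 0 t).ncard) * Real.exp (-lamm * (t - 0))
            ≤ μ ^ N0 * Real.exp ((lamm - δ) * (t - 0)) * Real.exp (-lamm * (t - 0)) :=
              mul_le_mul_of_nonneg_right hμk (Real.exp_pos _).le
          _ = μ ^ N0 * Real.exp (-δ * (t - 0)) := by rw [mul_assoc, hx1]
          _ ≤ μ ^ N0 := mul_le_of_le_one_right (Real.rpow_nonneg hμpos.le _)
              (Real.exp_le_one_iff.2
                (by rw [neg_mul]; exact neg_nonpos.2 (mul_nonneg hδ0.le (by linarith))))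
          _ ≤ K := hμN0K
      calc (μ:ℝ) ^ ((T ∩ Set.Ioc 0 t).ncard) * Real.exp (-lamm * (t - 0)) * V (sg 0) (x 0)
          ≤ (μ:ℝ) ^ ((T ∩ Set.Ioc 0 t).ncard) * Real.exp (-lamm * (t - 0)) * ω := by
            apply mul_le_mul_of_nonneg_left hW0 (by positivity)
        _ ≤ K * ω := mul_le_mul_of_nonneg_right ha hω.le
    have h2 : K * Ahat / δ * (1 - Real.exp (-δ * (t - 0))) ≤ K * Ahat / δ := by
      have hKA : (0:ℝ) ≤ K * Ahat / δ := div_nonneg (mul_nonneg (by linarith) hAhat0) hδ0.le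
      nlinarith [Real.exp_pos (-δ * (t - 0))]
    have h3 := max_le h1 le_rfl
    have h4 : K * Ahat / δ = K / δ * Ahat := by ring
    linarith [hmain]
end

section
/- Analytical bound on the switching ratio of quadratic Lyapunov functions (Proposition 1, bound for μ(κ)): For every κ > 0, all p, q ∈ P, and every x ∈ ℝ^n with (x − x_p*)ᵀ S_p (x − x_p*) ≥ κ, one has (x − x_q*)ᵀ S_q (x − x_q*) ≤ (λ_max(S_q)/λ_min(S_p)) · ( 1 + √(λ_max(S_p)/κ)·‖x_p* − x_q*‖ )² · (x − x_p*)ᵀ S_p (x − x_p*). -/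
open Matrix

private theorem quad_decomp (n : ℕ) (A : Matrix (Fin n) (Fin n) ℝ) (hA : A.IsHermitian)
    (v : Fin n → ℝ) :
    dotProduct v (A.mulVec v) =
      ∑ i, hA.eigenvalues i *
        (((star (hA.eigenvectorUnitary : Matrix (Fin n) (Fin n) ℝ)).mulVec v) i) ^ 2 ∧
    dotProduct v v =
      ∑ i, (((star (hA.eigenvectorUnitary : Matrix (Fin n) (Fin n) ℝ)).mulVec v) i) ^ 2 := by
  set U : Matrix (Fin n) (Fin n) ℝ := (hA.eigenvectorUnitary : Matrix (Fin n) (Fin n) ℝ) with hU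
  set w := (star U).mulVec v with hw
  have hUu : U ∈ Matrix.unitaryGroup (Fin n) ℝ := hA.eigenvectorUnitary.2
  have hstar : star U = Uᵀ := (conjTranspose_eq_transpose_of_trivial U)
  have hst : v = U.mulVec w := by
    rw [hw, mulVec_mulVec, (Matrix.mem_unitaryGroup_iff).mp hUu, one_mulVec]
  have hvm : vecMul v U = w := by
    rw [hst, vecMul_mulVec, ← hstar, (Matrix.mem_unitaryGroup_iff').mp hUu, vecMul_one]
  constructor
  · conv_lhs => rw [hA.spectral_theorem, Unitary.conjStarAlgAut_apply]
    rw [← hU, ← mulVec_mulVec, ← mulVec_mulVec, dotProduct_mulVec (A := U), hvm]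
    simp [mulVec_diagonal, dotProduct, mul_pow, Finset.mul_sum]
    exact Finset.sum_congr rfl fun i _ => by ring
  · conv_lhs => rw [hst]
    rw [dotProduct_mulVec (A := U), ← hst, hvm, dotProduct]
    simp [pow_two]

private theorem quad_le_sup (n : ℕ) (hn : 0 < n) (A : Matrix (Fin n) (Fin n) ℝ)
    (hA : A.IsHermitian) (v : Fin n → ℝ) :
    dotProduct v (A.mulVec v) ≤ (⨆ i, hA.eigenvalues i) * dotProduct v v := by
  haveI : Nonempty (Fin n) := ⟨⟨0, hn⟩⟩
  obtain ⟨h1, h2⟩ := quad_decomp n A hA v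
  rw [h1, h2, Finset.mul_sum]
  refine Finset.sum_le_sum fun i _ => ?_
  exact mul_le_mul_of_nonneg_right
    (le_ciSup (Set.Finite.bddAbove (Set.finite_range _)) i) (sq_nonneg _)

private theorem inf_quad_le (n : ℕ) (hn : 0 < n) (A : Matrix (Fin n) (Fin n) ℝ)
    (hA : A.IsHermitian) (v : Fin n → ℝ) :
    (⨅ i, hA.eigenvalues i) * dotProduct v v ≤ dotProduct v (A.mulVec v) := by
  haveI : Nonempty (Fin n) := ⟨⟨0, hn⟩⟩
  obtain ⟨h1, h2⟩ := quad_decomp n A hA v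
  rw [h1, h2, Finset.mul_sum]
  refine Finset.sum_le_sum fun i _ => ?_
  exact mul_le_mul_of_nonneg_right
    (ciInf_le (Set.Finite.bddBelow (Set.finite_range _)) i) (sq_nonneg _)

private theorem dot_self_eq_norm_sq (n : ℕ) (v : EuclideanSpace ℝ (Fin n)) :
    dotProduct (v : Fin n → ℝ) v = ‖v‖ ^ 2 := by
  rw [← real_inner_self_eq_norm_sq v]
  simp [dotProduct, PiLp.inner_apply, RCLike.inner_apply, conj_trivial, EuclideanSpace.real_norm_sq_eq, ← sq]

/-- Proposition 1, bound for `μ(κ)`: analytical bound on the switching ratio of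
quadratic Lyapunov functions `V_p(x) = (x - x_p*)ᵀ S_p (x - x_p*)`. -/
theorem quadratic_switching_ratio_bound
    (n : ℕ) (hn : 0 < n) (P : Type) [Fintype P] [Nonempty P]
    (S : P → Matrix (Fin n) (Fin n) ℝ)
    (hHerm : ∀ p, (S p).IsHermitian)
    (hPD : ∀ p, (S p).PosDef)
    (xstar : P → EuclideanSpace ℝ (Fin n))
    (κ : ℝ) (hκ : 0 < κ) (p q : P) (x : EuclideanSpace ℝ (Fin n))
    (hx : κ ≤ dotProduct (x - xstar p) ((S p).mulVec (x - xstar p))) :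
    dotProduct (x - xstar q) ((S q).mulVec (x - xstar q)) ≤
      (⨆ i, (hHerm q).eigenvalues i) / (⨅ i, (hHerm p).eigenvalues i) *
        (1 + Real.sqrt ((⨆ i, (hHerm p).eigenvalues i) / κ) * ‖xstar p - xstar q‖) ^ 2 *
        dotProduct (x - xstar p) ((S p).mulVec (x - xstar p)) := by
  haveI : Nonempty (Fin n) := ⟨⟨0, hn⟩⟩
  set lqM := ⨆ i, (hHerm q).eigenvalues i with hlqM
  set lpm := ⨅ i, (hHerm p).eigenvalues i with hlpm
  set lpM := ⨆ i, (hHerm p).eigenvalues i with hlpM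
  set na := ‖x - xstar p‖ with hna
  set nd := ‖xstar p - xstar q‖ with hnd
  set nb := ‖x - xstar q‖ with hnb
  set c := Real.sqrt (lpM / κ) with hc
  set Vp := dotProduct (x - xstar p) ((S p).mulVec (x - xstar p)) with hVp
  set Vq := dotProduct (x - xstar q) ((S q).mulVec (x - xstar q)) with hVq
  -- positivity of eigenvalue extremes
  have hlpm_pos : 0 < lpm := by
    have hbdd : BddBelow (Set.range fun i => (hHerm p).eigenvalues i) :=
      Set.Finite.bddBelow (Set.finite_range _)
    obtain ⟨i0⟩ := (inferInstance : Nonempty (Fin n))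
    have : ∀ i, (0:ℝ) < (hHerm p).eigenvalues i := fun i => (hPD p).eigenvalues_pos i
    obtain ⟨a, ha⟩ := Finite.exists_min fun i => (hHerm p).eigenvalues i
    calc (0:ℝ) < (hHerm p).eigenvalues a := this a
      _ ≤ lpm := le_ciInf ha
  have hlpM_pos : 0 < lpM := by
    obtain ⟨i0⟩ := (inferInstance : Nonempty (Fin n))
    calc (0:ℝ) < (hHerm p).eigenvalues i0 := (hPD p).eigenvalues_pos i0
      _ ≤ lpM := le_ciSup (Set.Finite.bddAbove (Set.finite_range _)) i0
  have hlqM_pos : 0 < lqM := by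
    obtain ⟨i0⟩ := (inferInstance : Nonempty (Fin n))
    calc (0:ℝ) < (hHerm q).eigenvalues i0 := (hPD q).eigenvalues_pos i0
      _ ≤ lqM := le_ciSup (Set.Finite.bddAbove (Set.finite_range _)) i0
  -- quadratic-form bounds
  have f1 : Vp ≤ lpM * na ^ 2 := by
    have := quad_le_sup n hn (S p) (hHerm p) (x - xstar p).ofLp
    rwa [dot_self_eq_norm_sq n (x - xstar p)] at this
  have f2 : lpm * na ^ 2 ≤ Vp := by
    have := inf_quad_le n hn (S p) (hHerm p) (x - xstar p).ofLp
    rwa [dot_self_eq_norm_sq n (x - xstar p)] at this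
  have f3 : Vq ≤ lqM * nb ^ 2 := by
    have := quad_le_sup n hn (S q) (hHerm q) (x - xstar q).ofLp
    rwa [dot_self_eq_norm_sq n (x - xstar q)] at this
  -- triangle inequality
  have f4 : nb ≤ na + nd := by
    have hsum : x - xstar q = (x - xstar p) + (xstar p - xstar q) := by abel
    rw [hnb, hsum]
    exact norm_add_le _ _
  have hna_nonneg : 0 ≤ na := norm_nonneg _
  have hnd_nonneg : 0 ≤ nd := norm_nonneg _
  have hc_nonneg : 0 ≤ c := Real.sqrt_nonneg _
  -- na ≥ sqrt(κ/lpM)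
  have hna_pos : 0 < na := by
    rcases lt_or_eq_of_le hna_nonneg with h | h
    · exact h
    · exfalso; rw [← h] at f1; simp at f1; linarith
  have f6 : 1 ≤ c * na := by
    have h1 : κ / lpM ≤ na ^ 2 := (div_le_iff₀ hlpM_pos).mpr (by nlinarith [f1])
    have h2 : Real.sqrt (κ / lpM) ≤ na := by
      calc Real.sqrt (κ / lpM) ≤ Real.sqrt (na ^ 2) := Real.sqrt_le_sqrt h1
        _ = na := Real.sqrt_sq hna_nonneg
    have h3 : c * Real.sqrt (κ / lpM) = 1 := by
      rw [hc, ← Real.sqrt_mul (by positivity)]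
      rw [show lpM / κ * (κ / lpM) = 1 by field_simp]
      exact Real.sqrt_one
    calc (1:ℝ) = c * Real.sqrt (κ / lpM) := h3.symm
      _ ≤ c * na := mul_le_mul_of_nonneg_left h2 hc_nonneg
  have f7 : na + nd ≤ na * (1 + c * nd) := by nlinarith [f6, hnd_nonneg]
  -- combine
  have hb2 : nb ^ 2 ≤ (na * (1 + c * nd)) ^ 2 := by
    have := f4.trans f7
    exact pow_le_pow_left₀ (norm_nonneg _) this 2
  have hT_nonneg : (0:ℝ) ≤ (1 + c * nd) ^ 2 := sq_nonneg _
  have hna2 : na ^ 2 ≤ Vp / lpm := (le_div_iff₀ hlpm_pos).mpr (by nlinarith [f2])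
  calc Vq ≤ lqM * nb ^ 2 := f3
    _ ≤ lqM * (na * (1 + c * nd)) ^ 2 := by
        exact mul_le_mul_of_nonneg_left hb2 hlqM_pos.le
    _ = lqM * (na ^ 2 * (1 + c * nd) ^ 2) := by ring
    _ ≤ lqM * (Vp / lpm * (1 + c * nd) ^ 2) := by
        refine mul_le_mul_of_nonneg_left ?_ hlqM_pos.le
        exact mul_le_mul_of_nonneg_right hna2 hT_nonneg
    _ = lqM / lpm * (1 + c * nd) ^ 2 * Vp := by ring
end

section
/- Inductive multi-switch Lyapunov estimate for switched discrete systems (equation (42) in the proof of Lemma 1): Let λ ∈ (0,1) and let α̂ be of class K∞ with V_p(f_p(x,u)) ≤ λ·V_p(x) + α̂(‖u‖) for all p ∈ P, x ∈ ℝ^n, u ∈ ℝ^m. Fix κ > 0 and let μ ≥ 1 satisfy V_q(x) ≤ μ·V_p(x) for all p, q ∈ P and all x with V_p(x) ≥ κ. Let σ be any switching signal, x_0 any initial state, d any bounded discrete disturbance, and (x_k) the solution. Let 0 < k_1 < k_2 < ⋯ enumerate the switching instants of σ (indices j ≥ 1 with σ(j) ≠ σ(j−1)) and set k_0 := 0.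 Suppose m ≥ 1 is such that k_m exists and V_{σ(k_n − 1)}(x_{k_n}) ≥ κ for all 1 ≤ n ≤ m. Then for every k ≥ k_m such that σ(j) = σ(k_m) for all k_m ≤ j ≤ k: V_{σ(k)}(x_k) ≤ μ^m·λ^k·V_{σ(0)}(x_0) + ( G(k_m, k) + Σ_{j=0}^{m−1} μ^{m−j}·λ^{k−k_{j+1}}·G(k_j, k_{j+1}) )·α̂(‖d‖∞), where G(a,b) := Σ_{i=0}^{b−a−1} λ^i for natural numbers a ≤ b. -/
/-- Equation (42) in the proof of Lemma 1: inductive multi-switch Lyapunov estimate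
for switched discrete systems.  Here `ks 0 = 0 < ks 1 < ⋯ < ks m'` enumerate the
switching instants of `sg` up to `ks m'`, and `G a b = ∑_{i=0}^{b-a-1} λ^i` appears
as an explicit geometric sum. -/
theorem inductive_multiswitch_estimate_discrete
    (n m : ℕ) (P : Type) [Fintype P] [Nonempty P]
    (f : P → EuclideanSpace ℝ (Fin n) → EuclideanSpace ℝ (Fin m) → EuclideanSpace ℝ (Fin n))
    (hf : ∀ p, Continuous fun xu : EuclideanSpace ℝ (Fin n) × EuclideanSpace ℝ (Fin m) =>
      f p xu.1 xu.2)
    (xstar : P → EuclideanSpace ℝ (Fin n))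
    (hfix : ∀ p, f p (xstar p) 0 = xstar p)
    (V : P → EuclideanSpace ℝ (Fin n) → ℝ)
    (hVcont : ∀ p, Continuous (V p))
    (hVnonneg : ∀ p x, 0 ≤ V p x)
    (lam : ℝ) (hlam0 : 0 < lam) (hlam1 : lam < 1)
    (ahat : ℝ → ℝ) (hahat : IsClassKInf ahat)
    (hdecr : ∀ p x u, V p (f p x u) ≤ lam * V p x + ahat ‖u‖)
    (κ : ℝ) (hκ : 0 < κ)
    (μ : ℝ) (hμ : 1 ≤ μ)
    (hμb : ∀ (p q : P) (x : EuclideanSpace ℝ (Fin n)), κ ≤ V p x → V q x ≤ μ * V p x)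
    (sg : ℕ → P)
    (d : ℕ → EuclideanSpace ℝ (Fin m)) (hd : BddAbove (Set.range fun k => ‖d k‖))
    (x : ℕ → EuclideanSpace ℝ (Fin n)) (hx : ∀ k, x (k + 1) = f (sg k) (x k) (d k))
    (ks : ℕ → ℕ) (m' : ℕ) (hm' : 1 ≤ m')
    (hks0 : ks 0 = 0)
    (hksmono : ∀ i < m', ks i < ks (i + 1))
    (hconst : ∀ i < m', ∀ j, ks i ≤ j → j < ks (i + 1) → sg j = sg (ks i))
    (hswitch : ∀ i, 1 ≤ i → i ≤ m' → sg (ks i) ≠ sg (ks i - 1))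
    (hgood : ∀ i, 1 ≤ i → i ≤ m' → κ ≤ V (sg (ks i - 1)) (x (ks i)))
    (k : ℕ) (hk : ks m' ≤ k)
    (hconst2 : ∀ j, ks m' ≤ j → j ≤ k → sg j = sg (ks m')) :
    V (sg k) (x k) ≤
      μ ^ m' * lam ^ k * V (sg 0) (x 0) +
        ((∑ i ∈ Finset.range (k - ks m'), lam ^ i) +
          ∑ j ∈ Finset.range m', μ ^ (m' - j) * lam ^ (k - ks (j + 1)) *
            ∑ i ∈ Finset.range (ks (j + 1) - ks j), lam ^ i) * ahat (⨆ j, ‖d j‖) := by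
  classical
  set D : ℝ := ⨆ j, ‖d j‖ with hD
  have hdle : ∀ j, ‖d j‖ ≤ D := fun j => le_ciSup hd j
  have hD0 : (0 : ℝ) ≤ D := le_trans (norm_nonneg _) (hdle 0)
  have hmonoa : MonotoneOn ahat (Set.Ici 0) := hahat.2.1.monotoneOn
  have hE0 : 0 ≤ ahat D := by
    have := hmonoa (Set.mem_Ici.2 le_rfl) (Set.mem_Ici.2 hD0) hD0
    rwa [hahat.2.2.1] at this
  have hstep : ∀ j, V (sg j) (x (j + 1)) ≤ lam * V (sg j) (x j) + ahat D := by
    intro j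
    rw [hx j]
    refine le_trans (hdecr _ _ _) (by
      have : ahat ‖d j‖ ≤ ahat D :=
        hmonoa (Set.mem_Ici.2 (norm_nonneg _)) (Set.mem_Ici.2 hD0) (hdle j)
      linarith)
  have hlam0' : (0:ℝ) ≤ lam := le_of_lt hlam0
  have hμ0 : (0:ℝ) ≤ μ := le_trans zero_le_one hμ
  have hGnn : ∀ N : ℕ, 0 ≤ ∑ i ∈ Finset.range N, lam ^ i := fun N =>
    Finset.sum_nonneg fun i _ => pow_nonneg hlam0' i
  -- single-interval estimate
  have interval : ∀ (a : ℕ) (p : P) (N : ℕ), (∀ j, a ≤ j → j < a + N → sg j = p) →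
      V p (x (a + N)) ≤ lam ^ N * V p (x a) + (∑ i ∈ Finset.range N, lam ^ i) * ahat D := by
    intro a p N
    induction N with
    | zero => intro _; simp
    | succ N ih =>
      intro hc
      have h1 : V p (x (a + N + 1)) ≤ lam * V p (x (a + N)) + ahat D := by
        have := hstep (a + N)
        rwa [hc (a + N) (by omega) (by omega)] at this
      have h2 := ih (fun j hj hj' => hc j hj (by omega))
      calc V p (x (a + (N + 1))) = V p (x (a + N + 1)) := by ring_nf
        _ ≤ lam * V p (x (a + N)) + ahat D := h1
        _ ≤ lam * (lam ^ N * V p (x a) + (∑ i ∈ Finset.range N, lam ^ i) * ahat D) + ahat D := by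
            nlinarith
        _ = lam ^ (N + 1) * V p (x a) + (∑ i ∈ Finset.range (N + 1), lam ^ i) * ahat D := by
            rw [geom_sum_succ]; ring
  -- main induction
  have aux : ∀ M : ℕ, (∀ i < M, ks i < ks (i + 1)) →
      (∀ i < M, ∀ j, ks i ≤ j → j < ks (i + 1) → sg j = sg (ks i)) →
      (∀ i, 1 ≤ i → i ≤ M → κ ≤ V (sg (ks i - 1)) (x (ks i))) →
      ∀ k', ks M ≤ k' → (∀ j, ks M ≤ j → j < k' → sg j = sg (ks M)) →
      V (sg (ks M)) (x k') ≤
        μ ^ M * lam ^ k' * V (sg 0) (x 0) +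
          ((∑ i ∈ Finset.range (k' - ks M), lam ^ i) +
            ∑ j ∈ Finset.range M, μ ^ (M - j) * lam ^ (k' - ks (j + 1)) *
              ∑ i ∈ Finset.range (ks (j + 1) - ks j), lam ^ i) * ahat D := by
    intro M
    induction M with
    | zero =>
      intro _ _ _ k' hk' hc
      have := interval 0 (sg (ks 0)) k' (by
        intro j hj hj'
        rw [hks0] at hc ⊢
        exact hc j (by omega) (by omega))
      simpa [hks0] using this
    | succ M ih =>
      intro hmono hc hg k' hk' hcc
      set K := ks (M + 1) with hK
      set a := ks M with ha
      have haK : a < K := hmono M (by omega)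
      -- monotonicity of ks up to M+1
      have hksle : ∀ t, ∀ i, i + t ≤ M + 1 → ks i ≤ ks (i + t) := by
        intro t
        induction t with
        | zero => intro i _; simp
        | succ t iht =>
          intro i hi
          calc ks i ≤ ks (i + t) := iht i (by omega)
            _ ≤ ks (i + t + 1) := le_of_lt (hmono (i + t) (by omega))
      -- step 1: interval from K to k'
      have h1 : V (sg K) (x k') ≤ lam ^ (k' - K) * V (sg K) (x K) +
          (∑ i ∈ Finset.range (k' - K), lam ^ i) * ahat D := by
        have := interval K (sg K) (k' - K) (by
          intro j hj hj'
          exact hcc j hj (by omega))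
        rwa [Nat.add_sub_cancel' hk'] at this
      -- step 2
      have hKm1 : sg (K - 1) = sg a := hc M (by omega) (K - 1) (by omega) (by omega)
      have h2 : V (sg K) (x K) ≤ μ * V (sg a) (x K) := by
        have := hμb (sg (K - 1)) (sg K) (x K) (hg (M + 1) (by omega) le_rfl)
        rwa [hKm1] at this
      -- step 3: induction hypothesis at K
      have h3 := ih (fun i hi => hmono i (by omega))
        (fun i hi => hc i (by omega)) (fun i h1i h2i => hg i h1i (by omega))
        K (le_of_lt haK) (fun j hj hj' => hc M (by omega) j hj hj')
      -- combine
      have hV3 : 0 ≤ V (sg a) (x K) := hVnonneg _ _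
      have hchain : V (sg K) (x k') ≤
          lam ^ (k' - K) * (μ * (μ ^ M * lam ^ K * V (sg 0) (x 0) +
            ((∑ i ∈ Finset.range (K - a), lam ^ i) +
              ∑ j ∈ Finset.range M, μ ^ (M - j) * lam ^ (K - ks (j + 1)) *
                ∑ i ∈ Finset.range (ks (j + 1) - ks j), lam ^ i) * ahat D)) +
          (∑ i ∈ Finset.range (k' - K), lam ^ i) * ahat D := by
        refine le_trans h1 ?_
        have hb : V (sg K) (x K) ≤ μ * (μ ^ M * lam ^ K * V (sg 0) (x 0) +
            ((∑ i ∈ Finset.range (K - a), lam ^ i) +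
              ∑ j ∈ Finset.range M, μ ^ (M - j) * lam ^ (K - ks (j + 1)) *
                ∑ i ∈ Finset.range (ks (j + 1) - ks j), lam ^ i) * ahat D) :=
          le_trans h2 (mul_le_mul_of_nonneg_left h3 hμ0)
        have := mul_le_mul_of_nonneg_left hb (pow_nonneg hlam0' (k' - K))
        linarith
      refine le_trans hchain (le_of_eq ?_)
      -- rewrite the sum over range (M+1)
      rw [Finset.sum_range_succ]
      have e1 : lam ^ (k' - K) * lam ^ K = lam ^ k' := by
        rw [← pow_add]; congr 1; omega
      have e2 : (M + 1) - M = 1 := by omega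
      have e3 : lam ^ (k' - K) * μ *
          (∑ j ∈ Finset.range M, μ ^ (M - j) * lam ^ (K - ks (j + 1)) *
            ∑ i ∈ Finset.range (ks (j + 1) - ks j), lam ^ i) =
          ∑ j ∈ Finset.range M, μ ^ (M + 1 - j) * lam ^ (k' - ks (j + 1)) *
            ∑ i ∈ Finset.range (ks (j + 1) - ks j), lam ^ i := by
        rw [Finset.mul_sum]
        refine Finset.sum_congr rfl ?_
        intro j hj
        have hjM : j < M := Finset.mem_range.1 hj
        have hkj : ks (j + 1) ≤ K := by
          have := hksle (M + 1 - (j + 1)) (j + 1) (by omega)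
          rwa [show j + 1 + (M + 1 - (j + 1)) = M + 1 by omega] at this
        have ep : lam ^ (k' - K) * lam ^ (K - ks (j + 1)) = lam ^ (k' - ks (j + 1)) := by
          rw [← pow_add]; congr 1; omega
        have eμ : μ * μ ^ (M - j) = μ ^ (M + 1 - j) := by
          rw [← pow_succ']; congr 1; omega
        calc lam ^ (k' - K) * μ * (μ ^ (M - j) * lam ^ (K - ks (j + 1)) *
              ∑ i ∈ Finset.range (ks (j + 1) - ks j), lam ^ i)
            = (μ * μ ^ (M - j)) * (lam ^ (k' - K) * lam ^ (K - ks (j + 1))) *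
              ∑ i ∈ Finset.range (ks (j + 1) - ks j), lam ^ i := by ring
          _ = μ ^ (M + 1 - j) * lam ^ (k' - ks (j + 1)) *
              ∑ i ∈ Finset.range (ks (j + 1) - ks j), lam ^ i := by rw [ep, eμ]
      rw [e2, pow_one, ← hK, ← ha, ← e3, ← e1, pow_succ]
      ring
  -- conclude
  have hsgk : sg k = sg (ks m') := hconst2 k hk le_rfl
  have := aux m' hksmono hconst hgood k hk (fun j hj hj' => hconst2 j hj (le_of_lt hj'))
  rw [hsgk]
  exact this
end
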